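/- Let G be a directed mixed graph, and let X and Y be distinct nodes and 𝐖 and 𝐙 be sets of nodes of G such that {X}, {Y}, 𝐖, 𝐙 are pairwise disjoint. If the minimal σ-connection X ⊥̸ Y | 𝐖 ∪ [𝐙] holds in G (that is, X ⊥̸ Y | 𝐖 ∪ 𝐙 and X ⊥ Y | 𝐖 ∪ 𝐙′ for every proper subset 𝐙′ ⊊ 𝐙), then 𝐙 ∩ an({X, Y} ∪ 𝐖) = ∅. -/

import Mathlib

/-- The three ways an edge of a directed mixed graph can occur on a walk,
when traversed from left to right: `fwd` is a directed edge pointing to the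
right node, `bwd` is a directed edge pointing to the left node, and `bi` is
a bidirected edge. -/
inductive EdgeDir : Type
  | fwd
  | bwd
  | bi
  deriving DecidableEq

/-- The edge has an arrowhead at its right endpoint. -/
def EdgeDir.headAtRight (e : EdgeDir) : Prop := e = .fwd ∨ e = .bi

/-- The edge has an arrowhead at its left endpoint. -/
def EdgeDir.headAtLeft (e : EdgeDir) : Prop := e = .bwd ∨ e = .bi

/-- A directed mixed graph (DMG) on node type `α`: an irreflexive relation of
directed edges and an irreflexive symmetric relation of bidirected edges. -/
structure DMG (α : Type*) where
  dir : α → α → Prop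
  bidir : α → α → Prop
  dir_irrefl : ∀ x, ¬ dir x x
  bidir_irrefl : ∀ x, ¬ bidir x x
  bidir_symm : ∀ x y, bidir x y → bidir y x

namespace DMG

variable {α : Type*}

/-- `G.Anc x y`: there is a directed path (possibly of length zero) from `x` to `y`,
i.e. `x` is an ancestor of `y` (equivalently, `y` is a descendant of `x`). -/
def Anc (G : DMG α) (x y : α) : Prop := Relation.ReflTransGen G.dir x y

/-- Ancestors of a set of nodes. -/
def ancSet (G : DMG α) (S : Set α) : Set α := {x | ∃ y ∈ S, G.Anc x y}

/-- The strongly connected component of `x`: all nodes that are both ancestors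
and descendants of `x`. -/
def scc (G : DMG α) (x : α) : Set α := {y | G.Anc y x ∧ G.Anc x y}

/-- Validity of one step of a walk, from `a` to `b`, traversed as `e`. -/
def StepValid (G : DMG α) (a : α) (e : EdgeDir) (b : α) : Prop :=
  match e with
  | .fwd => G.dir a b
  | .bwd => G.dir b a
  | .bi => G.bidir a b

/-- A walk from `x` to `y` in a DMG `G`: an alternating sequence of `n + 1` nodes
and `n` edges of `G`. -/
structure Walk (G : DMG α) (x y : α) where
  n : ℕ
  node : Fin (n + 1) → α
  edge : Fin n → EdgeDir
  first_eq : node 0 = x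
  last_eq : node (Fin.last n) = y
  valid : ∀ i : Fin n, G.StepValid (node i.castSucc) (edge i) (node i.succ)

namespace Walk

variable {G : DMG α} {x y : α}

/-- A path is a walk all of whose nodes are distinct. -/
def IsPath (w : Walk G x y) : Prop := Function.Injective w.node

/-- The interior node at position `i + 1` of the walk is a collider: both
adjacent edges have an arrowhead at it. -/
def IsColliderAt (w : Walk G x y) (i : ℕ) (h : i + 1 < w.n) : Prop :=
  (w.edge ⟨i, by omega⟩).headAtRight ∧ (w.edge ⟨i + 1, h⟩).headAtLeft

/-- The walk is σ-blocked by the conditioning set `C`. -/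
def Blocked (w : Walk G x y) (C : Set α) : Prop :=
  x ∈ C ∨ y ∈ C ∨
  (∃ (i : ℕ) (h : i + 1 < w.n), w.IsColliderAt i h ∧
    w.node ⟨i + 1, by omega⟩ ∉ G.ancSet C) ∨
  (∃ (i : ℕ) (h : i + 1 < w.n), ¬ w.IsColliderAt i h ∧
    w.node ⟨i + 1, by omega⟩ ∈ C ∧
    ((w.edge ⟨i, by omega⟩ = .bwd ∧
        w.node ⟨i, by omega⟩ ∉ G.scc (w.node ⟨i + 1, by omega⟩)) ∨
     (w.edge ⟨i + 1, h⟩ = .fwd ∧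
        w.node ⟨i + 2, by omega⟩ ∉ G.scc (w.node ⟨i + 1, by omega⟩))))

end Walk

/-- σ-separation: every path between `x` and `y` is σ-blocked by `C`. -/
def sigmaSep (G : DMG α) (x y : α) (C : Set α) : Prop :=
  ∀ w : Walk G x y, w.IsPath → w.Blocked C

/-- A confounding path between `x` and `y`: a path of nonzero length whose first
edge has an arrowhead at `x`, whose last edge has an arrowhead at `y`, and all of
whose non-endpoint nodes are non-colliders. -/
def IsConfoundingPath {G : DMG α} {x y : α} (w : Walk G x y) : Prop :=
  w.IsPath ∧ ∃ h : 0 < w.n,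
    (w.edge ⟨0, h⟩).headAtLeft ∧ (w.edge ⟨w.n - 1, by omega⟩).headAtRight ∧
    ∀ (i : ℕ) (hi : i + 1 < w.n), ¬ w.IsColliderAt i hi

/-- `x` and `y` are confounded in `G` if some confounding path connects them. -/
def Confounded (G : DMG α) (x y : α) : Prop := ∃ w : Walk G x y, IsConfoundingPath w

/-- A directed path from `x` to `y` (of length at least one) all of whose
intermediate nodes avoid `M`. -/
def DirPathAvoiding (G : DMG α) (M : Set α) (x y : α) : Prop :=
  ∃ l : List α, List.Chain G.dir x (l ++ [y]) ∧ ∀ v ∈ l, v ∉ M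

/-- A path between `x` and `y` with an arrowhead at `x` and an arrowhead at `y`,
all of whose intermediate nodes lie outside `M` and are non-colliders. -/
def BidirPathAvoiding (G : DMG α) (M : Set α) (x y : α) : Prop :=
  ∃ w : Walk G x y, w.IsPath ∧ (∃ h : 0 < w.n,
    (w.edge ⟨0, h⟩).headAtLeft ∧ (w.edge ⟨w.n - 1, by omega⟩).headAtRight) ∧
    ∀ (i : ℕ) (hi : i + 1 < w.n),
      w.node ⟨i + 1, by omega⟩ ∉ M ∧ ¬ w.IsColliderAt i hi

/-- The latent projection of `G` onto the node set `M`. -/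
def latentProj (G : DMG α) (M : Set α) : DMG M where
  dir a b := a.1 ≠ b.1 ∧ DirPathAvoiding G M a.1 b.1
  bidir a b := a.1 ≠ b.1 ∧
    (BidirPathAvoiding G M a.1 b.1 ∨ BidirPathAvoiding G M b.1 a.1)
  dir_irrefl := fun _a h => h.1 rfl
  bidir_irrefl := fun _a h => h.1 rfl
  bidir_symm := fun _a _b h => ⟨Ne.symm h.1, Or.symm h.2⟩

end DMG

/-! ### Auxiliary development for the main theorem -/

/-- Reversal of an edge direction. -/
def EdgeDir.flip : EdgeDir → EdgeDir
  | .fwd => .bwd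
  | .bwd => .fwd
  | .bi => .bi

lemma EdgeDir.headAtRight_flip (e : EdgeDir) : e.flip.headAtRight ↔ e.headAtLeft := by
  cases e <;> simp [EdgeDir.flip, EdgeDir.headAtRight, EdgeDir.headAtLeft]

lemma EdgeDir.headAtLeft_flip (e : EdgeDir) : e.flip.headAtLeft ↔ e.headAtRight := by
  cases e <;> simp [EdgeDir.flip, EdgeDir.headAtRight, EdgeDir.headAtLeft]

lemma EdgeDir.flip_eq_bwd (e : EdgeDir) : e.flip = .bwd ↔ e = .fwd := by
  cases e <;> simp [EdgeDir.flip]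

lemma EdgeDir.flip_eq_fwd (e : EdgeDir) : e.flip = .fwd ↔ e = .bwd := by
  cases e <;> simp [EdgeDir.flip]

lemma EdgeDir.eq_fwd_of_not_headAtLeft (e : EdgeDir) (h : ¬ e.headAtLeft) : e = .fwd := by
  cases e <;> simp [EdgeDir.headAtLeft] at h ⊢

lemma EdgeDir.eq_bwd_of_not_headAtRight (e : EdgeDir) (h : ¬ e.headAtRight) : e = .bwd := by
  cases e <;> simp [EdgeDir.headAtRight] at h ⊢

lemma EdgeDir.not_headAtRight_bwd : ¬ (EdgeDir.bwd).headAtRight := by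
  simp [EdgeDir.headAtRight]

lemma EdgeDir.not_headAtLeft_fwd : ¬ (EdgeDir.fwd).headAtLeft := by
  simp [EdgeDir.headAtLeft]

namespace DMG

variable {α : Type*} {G : DMG α} {x y : α}

lemma anc_refl (a : α) : G.Anc a a := Relation.ReflTransGen.refl

lemma anc_trans {a b c : α} (h1 : G.Anc a b) (h2 : G.Anc b c) : G.Anc a c :=
  Relation.ReflTransGen.trans h1 h2

lemma anc_single {a b : α} (h : G.dir a b) : G.Anc a b :=
  Relation.ReflTransGen.single h

lemma mem_ancSet {v : α} {C : Set α} : v ∈ G.ancSet C ↔ ∃ u ∈ C, G.Anc v u := Iff.rfl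

lemma mem_ancSet_of_anc {v u : α} {C : Set α} (h : G.Anc v u) (hu : u ∈ G.ancSet C) :
    v ∈ G.ancSet C := by
  obtain ⟨t, ht, h2⟩ := hu
  exact ⟨t, ht, anc_trans h h2⟩

lemma subset_ancSet (C : Set α) : C ⊆ G.ancSet C := fun u hu => ⟨u, hu, anc_refl u⟩

lemma stepValid_flip {a b : α} {e : EdgeDir} (h : G.StepValid a e b) :
    G.StepValid b e.flip a := by
  cases e with
  | fwd => exact h
  | bwd => exact h
  | bi => exact G.bidir_symm _ _ h

/-- A walk indexed by natural numbers (total functions), technically more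
convenient than `Walk` for surgery operations. -/
structure NWalk (G : DMG α) (x y : α) where
  n : ℕ
  node : ℕ → α
  edge : ℕ → EdgeDir
  first_eq : node 0 = x
  last_eq : node n = y
  valid : ∀ i, i < n → G.StepValid (node i) (edge i) (node (i + 1))

namespace NWalk

/-- The interior node at position `i+1` is a collider. -/
def Coll (w : NWalk G x y) (i : ℕ) : Prop :=
  (w.edge i).headAtRight ∧ (w.edge (i + 1)).headAtLeft

/-- σ-openness of a walk given a conditioning set `C`. -/
def Open (w : NWalk G x y) (C : Set α) : Prop :=
  x ∉ C ∧ y ∉ C ∧ ∀ i, i + 1 < w.n →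
    (w.Coll i → w.node (i + 1) ∈ G.ancSet C) ∧
    (¬ w.Coll i → w.node (i + 1) ∈ C →
      (w.edge i = .bwd → w.node i ∈ G.scc (w.node (i + 1))) ∧
      (w.edge (i + 1) = .fwd → w.node (i + 2) ∈ G.scc (w.node (i + 1))))

/-! #### Reversal -/

/-- Reversal of a walk. -/
def rev (w : NWalk G x y) : NWalk G y x where
  n := w.n
  node k := w.node (w.n - k)
  edge k := (w.edge (w.n - 1 - k)).flip
  first_eq := by simpa using w.last_eq
  last_eq := by simpa using w.first_eq
  valid := by
    intro k hk
    have e1 : w.n - k = (w.n - 1 - k) + 1 := by omega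
    have e2 : w.n - (k + 1) = w.n - 1 - k := by omega
    rw [e1, e2]
    exact stepValid_flip (w.valid (w.n - 1 - k) (by omega))

@[simp] lemma rev_n (w : NWalk G x y) : (w.rev).n = w.n := rfl

lemma rev_node (w : NWalk G x y) (k : ℕ) : (w.rev).node k = w.node (w.n - k) := rfl

lemma rev_edge (w : NWalk G x y) (k : ℕ) :
    (w.rev).edge k = (w.edge (w.n - 1 - k)).flip := rfl

lemma rev_coll (w : NWalk G x y) {q : ℕ} (hq : q + 1 < w.n) :
    (w.rev).Coll q ↔ w.Coll (w.n - 2 - q) := by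
  have e1 : w.n - 1 - q = (w.n - 2 - q) + 1 := by omega
  have e2 : w.n - 1 - (q + 1) = w.n - 2 - q := by omega
  simp only [Coll, rev_edge, e1, e2, EdgeDir.headAtRight_flip, EdgeDir.headAtLeft_flip]
  exact and_comm

lemma rev_open {C : Set α} {w : NWalk G x y} (hopen : w.Open C) : (w.rev).Open C := by
  refine ⟨hopen.2.1, hopen.1, ?_⟩
  intro q hq
  have hq' : q + 1 < w.n := hq
  set p := w.n - 2 - q with hp
  have e1 : w.n - 1 - q = p + 1 := by omega
  have e2 : w.n - 1 - (q + 1) = p := by omega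
  have e3 : w.n - q = p + 2 := by omega
  have e4 : w.n - (q + 1) = p + 1 := by omega
  have e5 : w.n - (q + 2) = p := by omega
  have hcoll : (w.rev).Coll q ↔ w.Coll p := by rw [rev_coll w hq', ← hp]
  have hint := hopen.2.2 p (by omega)
  constructor
  · intro hc
    have := hint.1 (hcoll.mp hc)
    rw [rev_node, e4]
    exact this
  · intro hnc hmem
    rw [rev_node, e4] at hmem
    have h2 := hint.2 (fun hc => hnc (hcoll.mpr hc)) hmem
    constructor
    · intro hb
      rw [rev_edge, e1, EdgeDir.flip_eq_bwd] at hb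
      have := h2.2 hb
      rw [rev_node, rev_node, e3, e4]
      exact this
    · intro hf
      rw [rev_edge, e2, EdgeDir.flip_eq_fwd] at hf
      have := h2.1 hf
      rw [rev_node, rev_node, e5, e4]
      exact this

/-! #### Shortcutting a repeated node -/

/-- Shortcut a walk between two positions carrying the same node. -/
def cut (w : NWalk G x y) (i j : ℕ) (hij : i < j) (hj : j ≤ w.n)
    (hv : w.node i = w.node j) : NWalk G x y where
  n := w.n - (j - i)
  node k := if k ≤ i then w.node k else w.node (k + (j - i))
  edge k := if k < i then w.edge k else w.edge (k + (j - i))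
  first_eq := by simp [w.first_eq]
  last_eq := by
    by_cases h : w.n - (j - i) ≤ i
    · have h1 : w.n - (j - i) = i := by omega
      have h2 : j = w.n := by omega
      rw [if_pos h, h1, hv, h2, w.last_eq]
    · rw [if_neg h, show w.n - (j - i) + (j - i) = w.n from by omega, w.last_eq]
  valid := by
    intro k hk
    by_cases h1 : k < i
    · rw [if_pos h1, if_pos (by omega : k ≤ i), if_pos (by omega : k + 1 ≤ i)]
      exact w.valid k (by omega)
    · rw [if_neg h1, if_neg (by omega : ¬ k + 1 ≤ i)]
      by_cases h2 : k ≤ i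
      · have hk' : k = i := by omega
        have e1 : k + (j - i) = j := by omega
        have e2 : k + 1 + (j - i) = j + 1 := by omega
        rw [if_pos h2, e1, e2, show w.node k = w.node j from by rw [hk']; exact hv]
        exact w.valid j (by omega)
      · rw [if_neg h2, show k + 1 + (j - i) = k + (j - i) + 1 from by omega]
        exact w.valid (k + (j - i)) (by omega)

section CutLemmas

variable {w : NWalk G x y} {i j : ℕ} {hij : i < j} {hj : j ≤ w.n} {hv : w.node i = w.node j}

@[simp] lemma cut_n : (w.cut i j hij hj hv).n = w.n - (j - i) := rfl

lemma cut_node_le {k : ℕ} (hk : k ≤ i) : (w.cut i j hij hj hv).node k = w.node k :=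
  if_pos hk

lemma cut_node_ge {k : ℕ} (hk : i ≤ k) :
    (w.cut i j hij hj hv).node k = w.node (k + (j - i)) := by
  by_cases h : k ≤ i
  · have hk' : k = i := by omega
    rw [cut_node_le h, hk', hv]
    congr 1
    omega
  · exact if_neg h

lemma cut_edge_lt {k : ℕ} (hk : k < i) : (w.cut i j hij hj hv).edge k = w.edge k :=
  if_pos hk

lemma cut_edge_ge {k : ℕ} (hk : i ≤ k) :
    (w.cut i j hij hj hv).edge k = w.edge (k + (j - i)) :=
  if_neg (by omega)

/-- Following forward edges from an occurrence of a node `w.node j`, an open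
walk must reach a collider (which is an ancestor of `C`) before any
backward edge. -/
lemma chain_reach {C : Set α} (hopen : w.Open C) {j : ℕ} (hj' : j < w.n)
    (hbwd : w.edge (j - 1) = .bwd) :
    ∀ k p, p + k = j → p < j → w.edge p = .fwd → G.Anc (w.node j) (w.node p) →
      w.node j ∈ G.ancSet C := by
  intro k
  induction k with
  | zero => intro p h1 h2 _ _; omega
  | succ k IH =>
    intro p hpk hpj hfwd hanc
    have hstep : G.dir (w.node p) (w.node (p + 1)) := by
      have := w.valid p (by omega)
      rw [hfwd] at this
      exact this
    have hanc1 : G.Anc (w.node j) (w.node (p + 1)) := anc_trans hanc (anc_single hstep)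
    by_cases hpj1 : p + 1 = j
    · exfalso
      rw [show p = j - 1 from by omega, hbwd] at hfwd
      exact absurd hfwd (by simp)
    · by_cases hL : (w.edge (p + 1)).headAtLeft
      · have hcol : w.Coll p := ⟨Or.inl hfwd, hL⟩
        have hmem := (hopen.2.2 p (by omega)).1 hcol
        exact mem_ancSet_of_anc hanc1 hmem
      · exact IH (p + 1) (by omega) (by omega) (EdgeDir.eq_fwd_of_not_headAtLeft _ hL) hanc1

lemma cut_open {C : Set α} (hopen : w.Open C) : (w.cut i j hij hj hv).Open C := by
  refine ⟨hopen.1, hopen.2.1, ?_⟩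
  intro q hq
  have hq' : q + 1 < w.n - (j - i) := hq
  have hint := hopen.2.2
  rcases lt_trichotomy (q + 1) i with h1 | h1 | h1
  · have hb1 : (w.cut i j hij hj hv).edge q = w.edge q := cut_edge_lt (by omega)
    have hb2 : (w.cut i j hij hj hv).edge (q + 1) = w.edge (q + 1) := cut_edge_lt h1
    have hn0 : (w.cut i j hij hj hv).node q = w.node q := cut_node_le (by omega)
    have hn1 : (w.cut i j hij hj hv).node (q + 1) = w.node (q + 1) := cut_node_le (by omega)
    have hn2 : (w.cut i j hij hj hv).node (q + 2) = w.node (q + 2) := cut_node_le (by omega)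
    simp only [Coll, hb1, hb2, hn0, hn1, hn2]
    have h := hint q (by omega)
    simp only [Coll] at h
    exact h
  · -- junction: q + 1 = i
    have hjn : j < w.n := by omega
    have hi1 : 1 ≤ i := by omega
    have hb1 : (w.cut i j hij hj hv).edge q = w.edge q := cut_edge_lt (by omega)
    have hb2 : (w.cut i j hij hj hv).edge (q + 1) = w.edge j := by
      rw [cut_edge_ge (by omega)]
      congr 1
      omega
    have hn0 : (w.cut i j hij hj hv).node q = w.node q := cut_node_le (by omega)
    have hn1 : (w.cut i j hij hj hv).node (q + 1) = w.node i := by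
      rw [cut_node_le (by omega : q + 1 ≤ i), h1]
    have hn2 : (w.cut i j hij hj hv).node (q + 2) = w.node (j + 1) := by
      rw [cut_node_ge (by omega)]
      congr 1
      omega
    simp only [Coll, hb1, hb2, hn0, hn1, hn2]
    constructor
    · rintro ⟨hR, hL⟩
      by_cases hLi : (w.edge i).headAtLeft
      · have := (hint q (by omega)).1 ⟨hR, by rw [h1]; exact hLi⟩
        rwa [h1] at this
      · have hfwd : w.edge i = .fwd := EdgeDir.eq_fwd_of_not_headAtLeft _ hLi
        by_cases hRj : (w.edge (j - 1)).headAtRight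
        · have hc : w.Coll (j - 1) :=
            ⟨hRj, by rw [show j - 1 + 1 = j from by omega]; exact hL⟩
          have := (hint (j - 1) (by omega)).1 hc
          rw [show j - 1 + 1 = j from by omega] at this
          rwa [hv]
        · have hbwd : w.edge (j - 1) = .bwd := EdgeDir.eq_bwd_of_not_headAtRight _ hRj
          have := chain_reach hopen hjn hbwd (j - i) i (by omega) hij hfwd
            (by rw [hv]; exact anc_refl _)
          rwa [hv]
    · intro hnc hmem
      constructor
      · intro hb
        have hnc' : ¬ w.Coll q := fun hc => EdgeDir.not_headAtRight_bwd (hb ▸ hc.1)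
        have h' := (hint q (by omega)).2 hnc' (by rw [h1]; exact hmem)
        have h'' := h'.1 hb
        rwa [h1] at h''
      · intro hf
        have hnc' : ¬ w.Coll (j - 1) := by
          intro hc
          have := hc.2
          rw [show j - 1 + 1 = j from by omega, hf] at this
          exact EdgeDir.not_headAtLeft_fwd this
        have h' := (hint (j - 1) (by omega)).2 hnc'
          (by rw [show j - 1 + 1 = j from by omega, ← hv]; exact hmem)
        have h'' := h'.2 (by rw [show j - 1 + 1 = j from by omega]; exact hf)
        rw [show j - 1 + 1 = j from by omega, show j - 1 + 2 = j + 1 from by omega,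
          ← hv] at h''
        exact h''
  · -- beyond the junction
    have hb1 : (w.cut i j hij hj hv).edge q = w.edge (q + (j - i)) := cut_edge_ge (by omega)
    have hb2 : (w.cut i j hij hj hv).edge (q + 1) = w.edge (q + 1 + (j - i)) :=
      cut_edge_ge (by omega)
    have hn0 : (w.cut i j hij hj hv).node q = w.node (q + (j - i)) := cut_node_ge (by omega)
    have hn1 : (w.cut i j hij hj hv).node (q + 1) = w.node (q + 1 + (j - i)) :=
      cut_node_ge (by omega)
    have hn2 : (w.cut i j hij hj hv).node (q + 2) = w.node (q + 2 + (j - i)) :=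
      cut_node_ge (by omega)
    simp only [Coll, hb1, hb2, hn0, hn1, hn2]
    have h := hint (q + (j - i)) (by omega)
    simp only [Coll] at h
    rw [show q + (j - i) + 1 = q + 1 + (j - i) from by omega,
      show q + (j - i) + 2 = q + 2 + (j - i) from by omega] at h
    exact h

end CutLemmas

/-! #### From open walks to open paths -/

lemma exists_inj_open {C : Set α} :
    ∀ (N : ℕ) (w : NWalk G x y), w.n ≤ N → w.Open C →
      ∃ w' : NWalk G x y, w'.Open C ∧
        ∀ a, a ≤ w'.n → ∀ b, b ≤ w'.n → w'.node a = w'.node b → a = b := by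
  intro N
  induction N with
  | zero =>
    intro w hw hopen
    exact ⟨w, hopen, fun a ha b hb _ => by omega⟩
  | succ N IH =>
    intro w hw hopen
    by_cases hinj : ∀ a, a ≤ w.n → ∀ b, b ≤ w.n → w.node a = w.node b → a = b
    · exact ⟨w, hopen, hinj⟩
    · push_neg at hinj
      obtain ⟨a, ha, b, hb, heq, hne⟩ := hinj
      rcases Ne.lt_or_gt hne with h | h
      · exact IH (w.cut a b h hb heq) (by show w.n - (b - a) ≤ N; omega) (cut_open hopen)
      · exact IH (w.cut b a h ha heq.symm) (by show w.n - (a - b) ≤ N; omega)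
          (cut_open hopen)

lemma exists_path_of_open {C : Set α} (w : NWalk G x y) (hopen : w.Open C)
    (hinj : ∀ a, a ≤ w.n → ∀ b, b ≤ w.n → w.node a = w.node b → a = b) :
    ∃ p : Walk G x y, p.IsPath ∧ ¬ p.Blocked C := by
  refine ⟨⟨w.n, fun i => w.node i.val, fun i => w.edge i.val,
    by simpa using w.first_eq, by simpa using w.last_eq,
    fun i => by simpa using w.valid i.val i.isLt⟩, ?_, ?_⟩
  · intro a b h
    exact Fin.ext (hinj a.val (Nat.lt_succ_iff.mp a.isLt) b.val (Nat.lt_succ_iff.mp b.isLt) h)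
  · intro hb
    rcases hb with h | h | ⟨i, hlt, hcol, hmem⟩ | ⟨i, hlt, hnc, hmem, hor⟩
    · exact hopen.1 h
    · exact hopen.2.1 h
    · exact hmem ((hopen.2.2 i hlt).1 hcol)
    · have hc := (hopen.2.2 i hlt).2 hnc hmem
      rcases hor with ⟨he, hs⟩ | ⟨he, hs⟩
      · exact hs (hc.1 he)
      · exact hs (hc.2 he)

/-! #### From `Walk` to `NWalk` -/

/-- Interpret a `Walk` as an `NWalk`. -/
def ofWalk (w : Walk G x y) : NWalk G x y where
  n := w.n
  node k := w.node ⟨min k w.n, by omega⟩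
  edge k := if h : k < w.n then w.edge ⟨k, h⟩ else .fwd
  first_eq := by
    show w.node ⟨min 0 w.n, by omega⟩ = x
    rw [show (⟨min 0 w.n, by omega⟩ : Fin (w.n + 1)) = 0 from by ext; simp]
    exact w.first_eq
  last_eq := by
    show w.node ⟨min w.n w.n, by omega⟩ = y
    rw [show (⟨min w.n w.n, by omega⟩ : Fin (w.n + 1)) = Fin.last w.n from by ext; simp]
    exact w.last_eq
  valid := by
    intro k hk
    rw [dif_pos hk,
      show (⟨min k w.n, by omega⟩ : Fin (w.n + 1)) = Fin.castSucc ⟨k, hk⟩ from by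
        ext; simpa using Nat.min_eq_left (by omega),
      show (⟨min (k + 1) w.n, by omega⟩ : Fin (w.n + 1)) = Fin.succ ⟨k, hk⟩ from by
        ext; simp [Nat.min_eq_left (by omega : k + 1 ≤ w.n)]]
    exact w.valid ⟨k, hk⟩

@[simp] lemma ofWalk_n (w : Walk G x y) : (ofWalk w).n = w.n := rfl

lemma ofWalk_node (w : Walk G x y) {k : ℕ} (hk : k ≤ w.n) :
    (ofWalk w).node k = w.node ⟨k, by omega⟩ := by
  show w.node _ = _
  congr 1
  ext
  simpa using Nat.min_eq_left hk

lemma ofWalk_edge (w : Walk G x y) {k : ℕ} (hk : k < w.n) :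
    (ofWalk w).edge k = w.edge ⟨k, hk⟩ := dif_pos hk

lemma ofWalk_open {C : Set α} {w : Walk G x y} (hb : ¬ w.Blocked C) :
    (ofWalk w).Open C := by
  refine ⟨fun h => hb (Or.inl h), fun h => hb (Or.inr (Or.inl h)), ?_⟩
  intro i hi
  have hi' : i + 1 < w.n := hi
  have hii : i < w.n := by omega
  have hcoll : (ofWalk w).Coll i ↔ w.IsColliderAt i hi' := by
    simp only [Coll, Walk.IsColliderAt, ofWalk_edge w hii, ofWalk_edge w hi']
  constructor
  · intro hc
    by_contra hmem
    refine hb (Or.inr (Or.inr (Or.inl ⟨i, hi', hcoll.mp hc, ?_⟩)))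
    rwa [ofWalk_node w (by omega)] at hmem
  · intro hnc hmem
    rw [ofWalk_node w (by omega)] at hmem
    constructor
    · intro he
      by_contra hs
      refine hb (Or.inr (Or.inr (Or.inr ⟨i, hi', fun hc => hnc (hcoll.mpr hc), hmem,
        Or.inl ⟨?_, ?_⟩⟩)))
      · rwa [ofWalk_edge w hii] at he
      · rwa [ofWalk_node w (by omega), ofWalk_node w (by omega)] at hs
    · intro he
      by_contra hs
      refine hb (Or.inr (Or.inr (Or.inr ⟨i, hi', fun hc => hnc (hcoll.mpr hc), hmem,
        Or.inr ⟨?_, ?_⟩⟩)))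
      · rwa [ofWalk_edge w hi'] at he
      · rwa [ofWalk_node w (by omega), ofWalk_node w (by omega)] at hs

/-! #### Monotonicity and grafting -/

lemma open_mono {C C' : Set α} (w : NWalk G x y) (hopen : w.Open C) (hsub : C' ⊆ C)
    (hcol : ∀ p, p + 1 < w.n → w.Coll p → w.node (p + 1) ∈ G.ancSet C') :
    w.Open C' :=
  ⟨fun h => hopen.1 (hsub h), fun h => hopen.2.1 (hsub h),
    fun i hi => ⟨hcol i hi, fun hnc hmem => (hopen.2.2 i hi).2 hnc (hsub hmem)⟩⟩

lemma exists_dirchain {a b : α} (h : G.Anc a b) :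
    ∃ (m : ℕ) (f : ℕ → α), f 0 = a ∧ f m = b ∧ ∀ t, t < m → G.dir (f t) (f (t + 1)) := by
  induction h using Relation.ReflTransGen.head_induction_on with
  | refl => exact ⟨0, fun _ => b, rfl, rfl, fun t ht => absurd ht (Nat.not_lt_zero t)⟩
  | @head u v h' h IH =>
    obtain ⟨m, f, hf0, hfm, hfv⟩ := IH
    refine ⟨m + 1, fun t => if t = 0 then u else f (t - 1), by simp, ?_, ?_⟩
    · show (if m + 1 = 0 then u else f (m + 1 - 1)) = b
      rw [if_neg (by omega)]
      simpa using hfm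
    · intro t ht
      dsimp only
      by_cases h0 : t = 0
      · subst h0
        rw [if_pos rfl, if_neg (by omega : ¬ (0 + 1 = 0)),
          show 0 + 1 - 1 = 0 from rfl, hf0]
        exact h'
      · rw [if_neg h0, if_neg (by omega : ¬ (t + 1 = 0)),
          show t + 1 - 1 = (t - 1) + 1 from by omega]
        exact hfv (t - 1) (by omega)

/-- Grafting a reversed directed path onto a tail segment of a walk. -/
def graftW {A B : α} (pi : NWalk G A B) (c : ℕ) (hc : c < pi.n) (m : ℕ) (f : ℕ → α)
    (hf0 : f 0 = pi.node c) (hfm : f m = A) (hfv : ∀ t, t < m → G.dir (f t) (f (t + 1))) :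
    NWalk G A B where
  n := m + (pi.n - c)
  node k := if k ≤ m then f (m - k) else pi.node (c + (k - m))
  edge k := if k < m then .bwd else pi.edge (c + (k - m))
  first_eq := by simp [hfm]
  last_eq := by
    rw [if_neg (by omega), show c + (m + (pi.n - c) - m) = pi.n from by omega, pi.last_eq]
  valid := by
    intro k hk
    by_cases h1 : k < m
    · rw [if_pos h1, if_pos (by omega : k ≤ m), if_pos (by omega : k + 1 ≤ m),
        show m - k = (m - (k + 1)) + 1 from by omega]
      exact hfv (m - (k + 1)) (by omega)
    · rw [if_neg h1, if_neg (by omega : ¬ k + 1 ≤ m)]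
      by_cases h2 : k ≤ m
      · have hk' : k = m := by omega
        subst hk'
        rw [if_pos h2, Nat.sub_self, hf0, Nat.add_zero,
          show c + (k + 1 - k) = c + 1 from by omega]
        exact pi.valid c hc
      · rw [if_neg h2, show c + (k + 1 - m) = c + (k - m) + 1 from by omega]
        exact pi.valid (c + (k - m)) (by omega)

section GraftLemmas

variable {A B : α} {pi : NWalk G A B} {c : ℕ} {hc : c < pi.n} {m : ℕ} {f : ℕ → α}
  {hf0 : f 0 = pi.node c} {hfm : f m = A} {hfv : ∀ t, t < m → G.dir (f t) (f (t + 1))}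

@[simp] lemma graftW_n : (graftW pi c hc m f hf0 hfm hfv).n = m + (pi.n - c) := rfl

lemma graftW_node_le {k : ℕ} (hk : k ≤ m) :
    (graftW pi c hc m f hf0 hfm hfv).node k = f (m - k) := if_pos hk

lemma graftW_node_ge {k : ℕ} (hk : m ≤ k) :
    (graftW pi c hc m f hf0 hfm hfv).node k = pi.node (c + (k - m)) := by
  by_cases h : k ≤ m
  · have hk' : k = m := by omega
    subst hk'
    show (if k ≤ k then f (k - k) else pi.node (c + (k - k))) = pi.node (c + (k - k))
    rw [if_pos le_rfl, Nat.sub_self, hf0, Nat.add_zero]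
  · exact if_neg h

lemma graftW_edge_lt {k : ℕ} (hk : k < m) :
    (graftW pi c hc m f hf0 hfm hfv).edge k = .bwd := if_pos hk

lemma graftW_edge_ge {k : ℕ} (hk : m ≤ k) :
    (graftW pi c hc m f hf0 hfm hfv).edge k = pi.edge (c + (k - m)) := if_neg (by omega)

end GraftLemmas

lemma graft {A B : α} (pi : NWalk G A B) (C C' : Set α) (hsub : C' ⊆ C)
    (hopen : pi.Open C) (c : ℕ) (hc : c < pi.n) (hbad : pi.node c ∉ G.ancSet C')
    (hmax : ∀ p, c ≤ p → p + 1 < pi.n → pi.Coll p → pi.node (p + 1) ∈ G.ancSet C')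
    (hanc : G.Anc (pi.node c) A) :
    ∃ ω : NWalk G A B, ω.Open C' := by
  obtain ⟨m, f, hf0, hfm, hfv⟩ := exists_dirchain hanc
  have hall : ∀ t, t ≤ m → G.Anc (pi.node c) (f t) := by
    intro t
    induction t with
    | zero =>
      intro _
      rw [hf0]
      exact anc_refl _
    | succ t IH =>
      intro ht
      exact anc_trans (IH (by omega)) (anc_single (hfv t (by omega)))
  have hfC' : ∀ t, t ≤ m → f t ∉ C' := fun t ht hmem => hbad ⟨f t, hmem, hall t ht⟩
  refine ⟨graftW pi c hc m f hf0 hfm hfv, fun h => hopen.1 (hsub h),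
    fun h => hopen.2.1 (hsub h), ?_⟩
  intro q hq
  have hq' : q + 1 < m + (pi.n - c) := hq
  by_cases h1 : q + 1 ≤ m
  · have hb1 : (graftW pi c hc m f hf0 hfm hfv).edge q = .bwd := graftW_edge_lt (by omega)
    have hn1 : (graftW pi c hc m f hf0 hfm hfv).node (q + 1) = f (m - (q + 1)) :=
      graftW_node_le h1
    constructor
    · intro hcoll
      exact absurd (hb1 ▸ hcoll.1) EdgeDir.not_headAtRight_bwd
    · intro _ hmem
      rw [hn1] at hmem
      exact absurd hmem (hfC' _ (by omega))
  · have h1' : m ≤ q := by omega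
    set r := c + (q - m) with hr
    have hrn : r + 1 < pi.n := by omega
    have hb1 : (graftW pi c hc m f hf0 hfm hfv).edge q = pi.edge r := graftW_edge_ge h1'
    have hb2 : (graftW pi c hc m f hf0 hfm hfv).edge (q + 1) = pi.edge (r + 1) := by
      rw [graftW_edge_ge (by omega), show c + (q + 1 - m) = r + 1 from by omega]
    have hn0 : (graftW pi c hc m f hf0 hfm hfv).node q = pi.node r := graftW_node_ge h1'
    have hn1 : (graftW pi c hc m f hf0 hfm hfv).node (q + 1) = pi.node (r + 1) := by
      rw [graftW_node_ge (by omega), show c + (q + 1 - m) = r + 1 from by omega]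
    have hn2 : (graftW pi c hc m f hf0 hfm hfv).node (q + 2) = pi.node (r + 2) := by
      rw [graftW_node_ge (by omega), show c + (q + 2 - m) = r + 2 from by omega]
    have hint := hopen.2.2 r hrn
    simp only [Coll, hb1, hb2, hn0, hn1, hn2]
    simp only [Coll] at hint
    constructor
    · intro hc2
      exact hmax r (by omega) hrn ⟨hc2.1, hc2.2⟩
    · intro hnc hmem
      exact hint.2 hnc (hsub hmem)

end NWalk

end DMG


/-- a minimal σ-connection `X ⊥̸ Y | W ∪ [Z]` implies
`Z ∩ an({X, Y} ∪ W) = ∅`. -/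
theorem minimal_sigma_connection_implies_nonancestors
    {α : Type*} [Fintype α] (G : DMG α) (X Y : α) (W Z : Set α)
    (hXY : X ≠ Y) (hXW : X ∉ W) (hXZ : X ∉ Z) (hYW : Y ∉ W) (hYZ : Y ∉ Z)
    (hWZ : Disjoint W Z)
    (hcon : ¬ G.sigmaSep X Y (W ∪ Z))
    (hmin : ∀ Z' ⊂ Z, G.sigmaSep X Y (W ∪ Z')) :
    Z ∩ G.ancSet ({X, Y} ∪ W) = ∅ := by
  classical
  rw [Set.eq_empty_iff_forall_notMem]
  rintro z ⟨hzZ, hzA⟩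
  have hsep := hmin (Z \ {z}) (Set.sdiff_singleton_ssubset.mpr hzZ)
  set C : Set α := W ∪ Z with hC
  set C' : Set α := W ∪ (Z \ {z}) with hC'
  have hsub : C' ⊆ C := Set.union_subset_union Set.Subset.rfl Set.diff_subset
  have hCd : ∀ u, u ∈ C → u ∈ C' ∨ u = z := by
    intro u hu
    rcases hu with h | h
    · exact Or.inl (Set.mem_union_left _ h)
    · by_cases huz : u = z
      · exact Or.inr huz
      · exact Or.inl (Set.mem_union_right _ (Set.mem_diff_singleton.mpr ⟨h, huz⟩))
  unfold DMG.sigmaSep at hcon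
  push_neg at hcon
  obtain ⟨w0, hw0path, hw0open⟩ := hcon
  have hπ : (DMG.NWalk.ofWalk w0).Open C := DMG.NWalk.ofWalk_open hw0open
  set π := DMG.NWalk.ofWalk w0 with hπdef
  suffices hex : ∃ ω : DMG.NWalk G X Y, ω.Open C' by
    obtain ⟨ω, hω⟩ := hex
    obtain ⟨ω', hω', hinj⟩ := DMG.NWalk.exists_inj_open ω.n ω le_rfl hω
    obtain ⟨p, hp, hpb⟩ := DMG.NWalk.exists_path_of_open ω' hω' hinj
    exact hpb (hsep p hp)
  have key : ∀ {A B : α} (ρ : DMG.NWalk G A B), ρ.Open C → ∀ i, i + 1 < ρ.n → ρ.Coll i →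
      ρ.node (i + 1) ∉ G.ancSet C' → G.Anc (ρ.node (i + 1)) z := by
    intro A B ρ hρ i h1 h2 h3
    obtain ⟨u, hu, hanc⟩ := (hρ.2.2 i h1).1 h2
    rcases hCd u hu with h | h
    · exact (h3 ⟨u, h, hanc⟩).elim
    · rwa [h] at hanc
  by_cases hbadex : ∃ i, i + 1 < π.n ∧ π.Coll i ∧ π.node (i + 1) ∉ G.ancSet C'
  · obtain ⟨i0, hi01, hi02, hi03⟩ := hbadex
    have hvz : G.Anc (π.node (i0 + 1)) z := key π hπ i0 hi01 hi02 hi03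
    have hzXY : G.Anc z X ∨ G.Anc z Y := by
      obtain ⟨u, hu, hancu⟩ := hzA
      simp only [Set.mem_union, Set.mem_insert_iff, Set.mem_singleton_iff] at hu
      rcases hu with (hu | hu) | hu
      · exact Or.inl (hu ▸ hancu)
      · exact Or.inr (hu ▸ hancu)
      · exact (hi03 ⟨u, Set.mem_union_left _ hu, DMG.anc_trans hvz hancu⟩).elim
    rcases hzXY with hzX | hzY
    · set bad : ℕ → Prop := fun i => i + 1 < π.n ∧ π.Coll i ∧ π.node (i + 1) ∉ G.ancSet C'
        with hbaddef
      have hb0 : bad i0 := ⟨hi01, hi02, hi03⟩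
      have hb1 : bad (Nat.findGreatest bad π.n) :=
        Nat.findGreatest_spec (by omega : i0 ≤ π.n) hb0
      set i₁ := Nat.findGreatest bad π.n with hi₁
      have hmax : ∀ p, i₁ + 1 ≤ p → p + 1 < π.n → π.Coll p →
          π.node (p + 1) ∈ G.ancSet C' := by
        intro p hp1 hp2 hp3
        by_contra hp4
        have hbadp : bad p := ⟨hp2, hp3, hp4⟩
        exact Nat.findGreatest_is_greatest (P := bad) (n := π.n) (by omega) (by omega) hbadp
      exact DMG.NWalk.graft π C C' hsub hπ (i₁ + 1) hb1.1 hb1.2.2 hmax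
        (DMG.anc_trans (key π hπ i₁ hb1.1 hb1.2.1 hb1.2.2) hzX)
    · have hπro : (π.rev).Open C := DMG.NWalk.rev_open hπ
      set bad : ℕ → Prop := fun i => i + 1 < (π.rev).n ∧ (π.rev).Coll i ∧
        (π.rev).node (i + 1) ∉ G.ancSet C' with hbaddef
      have hb0 : bad (π.n - 2 - i0) := by
        refine ⟨by show π.n - 2 - i0 + 1 < π.n; omega, ?_, ?_⟩
        · rw [DMG.NWalk.rev_coll π (by show π.n - 2 - i0 + 1 < π.n; omega),
            show π.n - 2 - (π.n - 2 - i0) = i0 from by omega]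
          exact hi02
        · rw [DMG.NWalk.rev_node,
            show π.n - (π.n - 2 - i0 + 1) = i0 + 1 from by omega]
          exact hi03
      have hb1 : bad (Nat.findGreatest bad (π.rev).n) :=
        Nat.findGreatest_spec (by show π.n - 2 - i0 ≤ π.n; omega) hb0
      set i₁ := Nat.findGreatest bad (π.rev).n with hi₁
      have hmax : ∀ p, i₁ + 1 ≤ p → p + 1 < (π.rev).n → (π.rev).Coll p →
          (π.rev).node (p + 1) ∈ G.ancSet C' := by
        intro p hp1 hp2 hp3
        by_contra hp4
        have hbadp : bad p := ⟨hp2, hp3, hp4⟩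
        exact Nat.findGreatest_is_greatest (P := bad) (n := (π.rev).n) (by omega)
          (by omega) hbadp
      obtain ⟨ω, hω⟩ := DMG.NWalk.graft (π.rev) C C' hsub hπro (i₁ + 1) hb1.1 hb1.2.2 hmax
        (DMG.anc_trans (key (π.rev) hπro i₁ hb1.1 hb1.2.1 hb1.2.2) hzY)
      exact ⟨ω.rev, DMG.NWalk.rev_open hω⟩
  · push_neg at hbadex
    exact ⟨π, DMG.NWalk.open_mono π hπ hsub hbadex⟩
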